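/- In the Klein model, let P₁ = {x : ⟪x,n₁⟫ = d₁} and P₂ = {x : ⟪x,n₂⟫ = d₂} be planes meeting the open unit ball (‖nᵢ‖=1, |dᵢ|<1). Then the dihedral angle between the hyperbolic planes P₁∩B³ and P₂∩B³ along their common geodesic (when they intersect inside B³) equals the intersection angle of the boundary circles P₁∩S² and P₂∩S²; in particular cos θ = (d₁d₂ − ⟪n₁,n₂⟫)/(√(1−d₁²)√(1−d₂²)). -/

import Mathlib

open RealInnerProductSpace

/-- The Beltrami–Klein metric tensor at a point `x` of the open unit ball. -/
noncomputable def kleinMetric (x ξ η : EuclideanSpace ℝ (Fin 3)) : ℝ :=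
  ⟪ξ, η⟫ / (1 - ‖x‖ ^ 2) + ⟪ξ, x⟫ * ⟪η, x⟫ / (1 - ‖x‖ ^ 2) ^ 2

noncomputable def crs (a b : EuclideanSpace ℝ (Fin 3)) : EuclideanSpace ℝ (Fin 3) :=
  (WithLp.equiv 2 _).symm ![a 1 * b 2 - a 2 * b 1, a 2 * b 0 - a 0 * b 2, a 0 * b 1 - a 1 * b 0]

lemma crs_apply0 (a b : EuclideanSpace ℝ (Fin 3)) : crs a b 0 = a 1 * b 2 - a 2 * b 1 := rfl
lemma crs_apply1 (a b : EuclideanSpace ℝ (Fin 3)) : crs a b 1 = a 2 * b 0 - a 0 * b 2 := rfl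
lemma crs_apply2 (a b : EuclideanSpace ℝ (Fin 3)) : crs a b 2 = a 0 * b 1 - a 1 * b 0 := rfl

lemma inner3 (a b : EuclideanSpace ℝ (Fin 3)) : ⟪a, b⟫ = a 0 * b 0 + a 1 * b 1 + a 2 * b 2 := by
  simp [PiLp.inner_apply, Fin.sum_univ_three, RCLike.inner_apply, mul_comm]

lemma crs_inner_left (a b : EuclideanSpace ℝ (Fin 3)) : ⟪crs a b, a⟫ = 0 := by
  rw [inner3, crs_apply0, crs_apply1, crs_apply2]; ring

lemma crs_inner_right (a b : EuclideanSpace ℝ (Fin 3)) : ⟪crs a b, b⟫ = 0 := by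
  rw [inner3, crs_apply0, crs_apply1, crs_apply2]; ring

lemma binet (a b c d : EuclideanSpace ℝ (Fin 3)) :
    ⟪crs a b, crs c d⟫ = ⟪a, c⟫ * ⟪b, d⟫ - ⟪a, d⟫ * ⟪b, c⟫ := by
  simp only [inner3, crs_apply0, crs_apply1, crs_apply2]; ring

lemma gram3 (a b c : EuclideanSpace ℝ (Fin 3)) :
    ⟪crs a b, c⟫ ^ 2 = ⟪a,a⟫*⟪b,b⟫*⟪c,c⟫ + 2*⟪a,b⟫*⟪a,c⟫*⟪b,c⟫
      - ⟪a,a⟫*⟪b,c⟫^2 - ⟪b,b⟫*⟪a,c⟫^2 - ⟪c,c⟫*⟪a,b⟫^2 := by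
  simp only [inner3, crs_apply0, crs_apply1, crs_apply2]; ring

lemma smuladd_apply (S τ : ℝ) (t x : EuclideanSpace ℝ (Fin 3)) (i : Fin 3) :
    (S • t + τ • x) i = S * t i + τ * x i := rfl

lemma B9 (S τ : ℝ) (a b x : EuclideanSpace ℝ (Fin 3)) :
    ⟪crs a (S • crs a b + τ • x), x⟫ = S * (⟪a,b⟫*⟪a,x⟫ - ⟪a,a⟫*⟪b,x⟫) := by
  simp only [inner3, crs_apply0, crs_apply1, crs_apply2, smuladd_apply]; ring

lemma B10 (S τ : ℝ) (a b x : EuclideanSpace ℝ (Fin 3)) :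
    ⟪crs (S • crs a b + τ • x) b, x⟫ = S * (⟪a,b⟫*⟪b,x⟫ - ⟪b,b⟫*⟪a,x⟫) := by
  simp only [inner3, crs_apply0, crs_apply1, crs_apply2, smuladd_apply]; ring

lemma B11 (S τ : ℝ) (a b x : EuclideanSpace ℝ (Fin 3)) :
    ⟪a, S • crs a b + τ • x⟫ = τ * ⟪a, x⟫ := by
  simp only [inner3, crs_apply0, crs_apply1, crs_apply2, smuladd_apply]; ring

lemma B12 (S τ : ℝ) (a b x : EuclideanSpace ℝ (Fin 3)) :
    ⟪b, S • crs a b + τ • x⟫ = τ * ⟪b, x⟫ := by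
  simp only [inner3, crs_apply0, crs_apply1, crs_apply2, smuladd_apply]; ring

lemma B13 (S τ : ℝ) (a b x : EuclideanSpace ℝ (Fin 3)) :
    ⟪S • crs a b + τ • x, S • crs a b + τ • x⟫
      = S^2*(⟪a,a⟫*⟪b,b⟫-⟪a,b⟫^2) + 2*S*τ*⟪crs a b, x⟫ + τ^2*⟪x,x⟫ := by
  simp only [inner3, crs_apply0, crs_apply1, crs_apply2, smuladd_apply]; ring

set_option maxHeartbeats 1000000 in
/-- In the Klein model, let `P₁ = {⟪x,n₁⟫ = d₁}` and `P₂ = {⟪x,n₂⟫ = d₂}`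
(`‖nᵢ‖ = 1`, `|dᵢ| < 1`, `P₁ ≠ P₂`) be planes meeting inside the open unit ball.
At any point `x` of their common geodesic, one can choose a nonzero direction `t`
of the common geodesic (tangent to both planes) and nonzero directions `ξᵢ`
tangent to `Pᵢ` and Klein-orthogonal to `t` at `x`, such that the cosine of the
(exterior) dihedral angle between the two hyperbolic planes, computed with the
Klein metric, equals the intersection angle of the boundary circles `Pᵢ ∩ S²`:
`cos θ = (d₁d₂ - ⟪n₁,n₂⟫)/(√(1-d₁²)√(1-d₂²))`. -/
theorem dihedral_angle_eq_circle_angle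
    (n₁ n₂ : EuclideanSpace ℝ (Fin 3)) (d₁ d₂ : ℝ)
    (hn₁ : ‖n₁‖ = 1) (hn₂ : ‖n₂‖ = 1) (hd₁ : |d₁| < 1) (hd₂ : |d₂| < 1)
    (hne : {x : EuclideanSpace ℝ (Fin 3) | ⟪x, n₁⟫ = d₁} ≠
           {x : EuclideanSpace ℝ (Fin 3) | ⟪x, n₂⟫ = d₂})
    (x : EuclideanSpace ℝ (Fin 3)) (hx : ‖x‖ < 1)
    (hx₁ : ⟪x, n₁⟫ = d₁) (hx₂ : ⟪x, n₂⟫ = d₂) :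
    ∃ t ξ₁ ξ₂ : EuclideanSpace ℝ (Fin 3),
      t ≠ 0 ∧ ⟪t, n₁⟫ = 0 ∧ ⟪t, n₂⟫ = 0 ∧
      ξ₁ ≠ 0 ∧ ⟪ξ₁, n₁⟫ = 0 ∧ kleinMetric x ξ₁ t = 0 ∧
      ξ₂ ≠ 0 ∧ ⟪ξ₂, n₂⟫ = 0 ∧ kleinMetric x ξ₂ t = 0 ∧
      kleinMetric x ξ₁ ξ₂ /
          (Real.sqrt (kleinMetric x ξ₁ ξ₁) * Real.sqrt (kleinMetric x ξ₂ ξ₂)) =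
        (d₁ * d₂ - ⟪n₁, n₂⟫) / (Real.sqrt (1 - d₁ ^ 2) * Real.sqrt (1 - d₂ ^ 2)) := by
  obtain ⟨S, hSdef⟩ : ∃ S : ℝ, 1 - ‖x‖ ^ 2 = S := ⟨_, rfl⟩
  have hS : 0 < S := by
    rw [← hSdef]; have : ‖x‖ ^ 2 < 1 := by nlinarith [norm_nonneg x]
    linarith
  have hS0 : S ≠ 0 := ne_of_gt hS
  have hnn1 : ⟪n₁, n₁⟫ = 1 := by rw [real_inner_self_eq_norm_sq, hn₁]; norm_num
  have hnn2 : ⟪n₂, n₂⟫ = 1 := by rw [real_inner_self_eq_norm_sq, hn₂]; norm_num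
  have hxx : ⟪x, x⟫ = 1 - S := by rw [real_inner_self_eq_norm_sq, ← hSdef]; ring
  have hxn1 : ⟪n₁, x⟫ = d₁ := by rw [real_inner_comm]; exact hx₁
  have hxn2 : ⟪n₂, x⟫ = d₂ := by rw [real_inner_comm]; exact hx₂
  obtain ⟨K, hKdef⟩ : ∃ K : ℝ, ⟪n₁, n₂⟫ = K := ⟨_, rfl⟩
  obtain ⟨t, htdef⟩ : ∃ t : EuclideanSpace ℝ (Fin 3), crs n₁ n₂ = t := ⟨_, rfl⟩
  obtain ⟨τ, hτdef⟩ : ∃ τ : ℝ, ⟪t, x⟫ = τ := ⟨_, rfl⟩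
  -- metric as a single fraction
  have hkm : ∀ ξ η : EuclideanSpace ℝ (Fin 3),
      kleinMetric x ξ η = (S * ⟪ξ, η⟫ + ⟪ξ, x⟫ * ⟪η, x⟫) / S ^ 2 := by
    intro ξ η
    rw [kleinMetric, hSdef]; field_simp
  -- norm of t
  have hT : ⟪t, t⟫ = 1 - K ^ 2 := by
    rw [← htdef, binet, hnn1, hnn2, hKdef, real_inner_comm n₁ n₂, hKdef]; ring
  -- K² < 1
  have hK2le : K ^ 2 ≤ 1 := by
    have := real_inner_self_nonneg (x := t); rw [hT] at this; linarith
  have hK2ne : K ^ 2 ≠ 1 := by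
    intro h
    have hzero : ⟪n₂ - K • n₁, n₂ - K • n₁⟫ = 0 := by
      rw [inner_sub_sub_self, real_inner_smul_left, real_inner_smul_right,
        real_inner_smul_left, real_inner_smul_right, hnn1, hnn2, hKdef,
        real_inner_comm n₁ n₂, hKdef]
      nlinarith
    have h2 : n₂ = K • n₁ := by
      have := inner_self_eq_zero.mp hzero
      rwa [sub_eq_zero] at this
    have hK0 : K ≠ 0 := by intro h0; rw [h0] at h; norm_num at h
    have hd2K : d₂ = K * d₁ := by rw [← hx₂, ← hx₁, h2, real_inner_smul_right]
    apply hne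
    ext y
    simp only [Set.mem_setOf_eq, h2, real_inner_smul_right, hd2K]
    constructor
    · intro hy; rw [hy]
    · intro hy; exact mul_left_cancel₀ hK0 hy
  have hK2 : K ^ 2 < 1 := lt_of_le_of_ne hK2le hK2ne
  -- t ≠ 0
  have htne : t ≠ 0 := by
    intro h
    rw [h, inner_zero_left] at hT
    nlinarith
  -- Gram identity
  have hGram : τ ^ 2 = (1 - S) * (1 - K ^ 2) + 2 * K * d₁ * d₂ - d₁ ^ 2 - d₂ ^ 2 := by
    have hg := gram3 n₁ n₂ x
    rw [hnn1, hnn2, hxx, hxn1, hxn2, hKdef, htdef, hτdef] at hg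
    linarith [hg]
  obtain ⟨v, hvdef⟩ : ∃ v : EuclideanSpace ℝ (Fin 3), S • t + τ • x = v := ⟨_, rfl⟩
  obtain ⟨ξ₁, hξ₁def⟩ : ∃ ξ : EuclideanSpace ℝ (Fin 3), crs n₁ v = ξ := ⟨_, rfl⟩
  obtain ⟨ξ₂, hξ₂def⟩ : ∃ ξ : EuclideanSpace ℝ (Fin 3), crs v n₂ = ξ := ⟨_, rfl⟩
  -- inner products with x
  have hξ₁x : ⟪ξ₁, x⟫ = S * (K * d₁ - d₂) := by
    have hb := B9 S τ n₁ n₂ x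
    rw [htdef, hvdef, hξ₁def, hKdef, hnn1, hxn1, hxn2] at hb
    rw [hb]; ring
  have hξ₂x : ⟪ξ₂, x⟫ = S * (K * d₂ - d₁) := by
    have hb := B10 S τ n₁ n₂ x
    rw [htdef, hvdef, hξ₂def, hKdef, hnn2, hxn1, hxn2] at hb
    rw [hb]; ring
  -- inner products with v
  have hn1v : ⟪n₁, v⟫ = τ * d₁ := by
    have hb := B11 S τ n₁ n₂ x
    rw [htdef, hvdef, hxn1] at hb; exact hb
  have hn2v : ⟪n₂, v⟫ = τ * d₂ := by
    have hb := B12 S τ n₁ n₂ x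
    rw [htdef, hvdef, hxn2] at hb; exact hb
  have hvv : ⟪v, v⟫ = S ^ 2 * (1 - K ^ 2) + 2 * S * τ ^ 2 + τ ^ 2 * (1 - S) := by
    have hb := B13 S τ n₁ n₂ x
    rw [htdef, hvdef, hnn1, hnn2, hKdef, hxx, hτdef] at hb
    rw [hb]; ring
  -- the Gram-matrix entries
  have h11 : ⟪ξ₁, ξ₁⟫ = (S ^ 2 * (1 - K ^ 2) + 2 * S * τ ^ 2 + τ ^ 2 * (1 - S)) - τ ^ 2 * d₁ ^ 2 := by
    have hb := binet n₁ v n₁ v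
    rw [hξ₁def, hnn1, real_inner_comm n₁ v, hn1v, hvv] at hb
    rw [hb]; ring
  have h22 : ⟪ξ₂, ξ₂⟫ = (S ^ 2 * (1 - K ^ 2) + 2 * S * τ ^ 2 + τ ^ 2 * (1 - S)) - τ ^ 2 * d₂ ^ 2 := by
    have hb := binet v n₂ v n₂
    rw [hξ₂def, hnn2, real_inner_comm n₂ v, hn2v, hvv] at hb
    rw [hb]; ring
  have h12 : ⟪ξ₁, ξ₂⟫ = τ ^ 2 * d₁ * d₂
      - K * (S ^ 2 * (1 - K ^ 2) + 2 * S * τ ^ 2 + τ ^ 2 * (1 - S)) := by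
    have hb := binet n₁ v v n₂
    rw [hξ₁def, hξ₂def, hKdef, real_inner_comm n₂ v, hn1v, hn2v, hvv] at hb
    rw [hb]; ring
  -- the common positive factor
  obtain ⟨C, hCdef⟩ : ∃ C : ℝ, S * (S * (1 - K ^ 2) + τ ^ 2) = C := ⟨_, rfl⟩
  have hC : 0 < C := by
    rw [← hCdef]
    exact mul_pos hS (add_pos_of_pos_of_nonneg (mul_pos hS (by linarith)) (sq_nonneg τ))
  -- numerator identities
  have e11 : S * ⟪ξ₁, ξ₁⟫ + ⟪ξ₁, x⟫ * ⟪ξ₁, x⟫ = C * (1 - d₁ ^ 2) := by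
    rw [h11, hξ₁x]; linear_combination (S ^ 2) * hGram + (1 - d₁ ^ 2) * hCdef
  have e22 : S * ⟪ξ₂, ξ₂⟫ + ⟪ξ₂, x⟫ * ⟪ξ₂, x⟫ = C * (1 - d₂ ^ 2) := by
    rw [h22, hξ₂x]; linear_combination (S ^ 2) * hGram + (1 - d₂ ^ 2) * hCdef
  have e12 : S * ⟪ξ₁, ξ₂⟫ + ⟪ξ₁, x⟫ * ⟪ξ₂, x⟫ = C * (d₁ * d₂ - K) := by
    rw [h12, hξ₁x, hξ₂x]
    linear_combination (-(S ^ 2 * K)) * hGram + (d₁ * d₂ - K) * hCdef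
  -- nonvanishing of ξ₁, ξ₂
  have hd₁sq : 0 < 1 - d₁ ^ 2 := by
    have := abs_lt.mp hd₁; nlinarith
  have hd₂sq : 0 < 1 - d₂ ^ 2 := by
    have := abs_lt.mp hd₂; nlinarith
  have hξ₁ne : ξ₁ ≠ 0 := by
    intro h; rw [h, inner_zero_left, inner_zero_left] at e11; nlinarith
  have hξ₂ne : ξ₂ ≠ 0 := by
    intro h; rw [h, inner_zero_left, inner_zero_left] at e22; nlinarith
  -- Klein-orthogonality to t
  have horth : ∀ ξ : EuclideanSpace ℝ (Fin 3), ⟪ξ, v⟫ = 0 → kleinMetric x ξ t = 0 := by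
    intro ξ hξv
    rw [hkm, hτdef]
    rw [← hvdef, inner_add_right, real_inner_smul_right, real_inner_smul_right] at hξv
    rw [div_eq_zero_iff]; left; linear_combination hξv
  have horth1 : kleinMetric x ξ₁ t = 0 := by
    refine horth ξ₁ ?_
    rw [← hξ₁def]; exact crs_inner_right n₁ v
  have horth2 : kleinMetric x ξ₂ t = 0 := by
    refine horth ξ₂ ?_
    rw [← hξ₂def]; exact crs_inner_left v n₂
  refine ⟨t, ξ₁, ξ₂, htne, ?_, ?_, hξ₁ne, ?_, horth1, hξ₂ne, ?_, horth2, ?_⟩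
  · rw [← htdef]; exact crs_inner_left n₁ n₂
  · rw [← htdef]; exact crs_inner_right n₁ n₂
  · rw [← hξ₁def]; exact crs_inner_left n₁ v
  · rw [← hξ₂def]; exact crs_inner_right v n₂
  -- the main computation
  · have gk11 : kleinMetric x ξ₁ ξ₁ = (C / S ^ 2) * (1 - d₁ ^ 2) := by
      rw [hkm, e11]; ring
    have gk22 : kleinMetric x ξ₂ ξ₂ = (C / S ^ 2) * (1 - d₂ ^ 2) := by
      rw [hkm, e22]; ring
    have gk12 : kleinMetric x ξ₁ ξ₂ = (C / S ^ 2) * (d₁ * d₂ - K) := by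
      rw [hkm, e12]; ring
    have hQ : 0 < C / S ^ 2 := by positivity
    rw [gk11, gk22, gk12, hKdef,
      Real.sqrt_mul hQ.le, Real.sqrt_mul hQ.le]
    have hsq : Real.sqrt (C / S ^ 2) * Real.sqrt (C / S ^ 2) = C / S ^ 2 :=
      Real.mul_self_sqrt hQ.le
    have hrw : Real.sqrt (C / S ^ 2) * Real.sqrt (1 - d₁ ^ 2) *
        (Real.sqrt (C / S ^ 2) * Real.sqrt (1 - d₂ ^ 2))
        = (C / S ^ 2) * (Real.sqrt (1 - d₁ ^ 2) * Real.sqrt (1 - d₂ ^ 2)) := by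
      rw [mul_mul_mul_comm, hsq]
    rw [hrw]
    exact mul_div_mul_left _ _ (ne_of_gt hQ)
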